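/- Let J, K, S, w* be real numbers with w* < 0 and S = √(-w*). Then the 4×4 real linear system for vectors b, d ∈ ℂ² given by (I - (iJ/(4w*))σ₂) b + (J/(2S)) σ₂ d = (J, 0)ᵀ and ((J + SK)/(4 w* S)) σ₂ b + (I - (iJ + 2iSK)/(4w*) σ₂) d = (iK, 0)ᵀ has determinant-type denominator D = (16 w*² + J²)² + 64 w*² (J + SK)², which satisfies D ≥ 256 w*⁴ > 0; hence the system has a unique solution for all real J, K. -/

import Mathlib

open Matrix Complex

private lemma aux_I_pow2 : Complex.I ^ 2 = -1 := by norm_num [pow_succ, Complex.I_mul_I]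
private lemma aux_I_pow3 : Complex.I ^ 3 = -Complex.I := by norm_num [pow_succ, Complex.I_mul_I]
private lemma aux_I_pow4 : Complex.I ^ 4 = 1 := by norm_num [pow_succ, Complex.I_mul_I]
private lemma aux_I_pow5 : Complex.I ^ 5 = Complex.I := by norm_num [pow_succ, Complex.I_mul_I]
private lemma aux_I_pow6 : Complex.I ^ 6 = -1 := by norm_num [pow_succ, Complex.I_mul_I]
private lemma aux_I_pow7 : Complex.I ^ 7 = -Complex.I := by norm_num [pow_succ, Complex.I_mul_I]
private lemma aux_I_pow8 : Complex.I ^ 8 = 1 := by norm_num [pow_succ, Complex.I_mul_I]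

set_option maxHeartbeats 4000000 in
/-- the linear system determining the principal part of the parametrix has
denominator `D = (16w*² + J²)² + 64w*²(J + SK)² ≥ 256w*⁴ > 0`, hence a unique solution. -/
theorem stmt_15 (J K S ws : ℝ) (hws : ws < 0) (hS : S = Real.sqrt (-ws)) :
    let σ₂ : Matrix (Fin 2) (Fin 2) ℂ := !![0, -Complex.I; Complex.I, 0]
    let D : ℝ := (16 * ws ^ 2 + J ^ 2) ^ 2 + 64 * ws ^ 2 * (J + S * K) ^ 2
    256 * ws ^ 4 ≤ D ∧ 0 < D ∧
    ∃! bd : (Fin 2 → ℂ) × (Fin 2 → ℂ),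
      ((1 : Matrix (Fin 2) (Fin 2) ℂ)
          - (Complex.I * (J : ℂ) / (4 * (ws : ℂ))) • σ₂) *ᵥ bd.1
        + (((J : ℂ) / (2 * (S : ℂ))) • (σ₂ *ᵥ bd.2)) = ![(J : ℂ), 0] ∧
      ((((J : ℂ) + (S : ℂ) * (K : ℂ)) / (4 * (ws : ℂ) * (S : ℂ))) • (σ₂ *ᵥ bd.1))
        + ((1 : Matrix (Fin 2) (Fin 2) ℂ)
            - ((Complex.I * (J : ℂ) + 2 * Complex.I * (S : ℂ) * (K : ℂ)) / (4 * (ws : ℂ))) • σ₂)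
          *ᵥ bd.2 = ![Complex.I * (K : ℂ), 0] := by
  have hwsneg : 0 < -ws := by linarith
  have hS0 : 0 < S := by rw [hS]; exact Real.sqrt_pos.mpr hwsneg
  have hS2 : S ^ 2 = -ws := by rw [hS, Real.sq_sqrt hwsneg.le]
  have hws2 : ws = -S ^ 2 := by linarith
  subst hws2
  intro σ₂ D
  have hSne : S ≠ 0 := ne_of_gt hS0
  have hScne : (S : ℂ) ≠ 0 := by exact_mod_cast hSne
  have hDR : (0:ℝ) < (16*S^4+J^2)^2 + (8*S^2*(J+S*K))^2 := by positivity
  have hD : ((16*(S:ℂ)^4+(J:ℂ)^2)^2 + (8*(S:ℂ)^2*((J:ℂ)+(S:ℂ)*(K:ℂ)))^2) ≠ 0 := by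
    have h := ne_of_gt hDR
    exact_mod_cast (by push_cast; ring_nf : (((16*S^4+J^2)^2 + (8*S^2*(J+S*K))^2 : ℝ) : ℂ) = (16*(S:ℂ)^4+(J:ℂ)^2)^2 + (8*(S:ℂ)^2*((J:ℂ)+(S:ℂ)*(K:ℂ)))^2) ▸ (Complex.ofReal_ne_zero.mpr h)
  refine ⟨?_, ?_, ?_⟩
  · show 256 * (-S^2) ^ 4 ≤ (16 * (-S^2) ^ 2 + J ^ 2) ^ 2 + 64 * (-S^2) ^ 2 * (J + S * K) ^ 2
    nlinarith [sq_nonneg J, sq_nonneg (J + S*K), sq_nonneg (S^2), sq_nonneg (J^2), pow_pos hS0 4]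
  · show (0:ℝ) < (16 * (-S^2) ^ 2 + J ^ 2) ^ 2 + 64 * (-S^2) ^ 2 * (J + S * K) ^ 2
    nlinarith [hDR]
  · set L : ((Fin 2 → ℂ) × (Fin 2 → ℂ)) →ₗ[ℂ] ((Fin 2 → ℂ) × (Fin 2 → ℂ)) :=
      { toFun := fun bd =>
          (((1 : Matrix (Fin 2) (Fin 2) ℂ)
              - (Complex.I * (J : ℂ) / (4 * ((-S ^ 2 : ℝ) : ℂ))) • σ₂) *ᵥ bd.1
            + (((J : ℂ) / (2 * (S : ℂ))) • (σ₂ *ᵥ bd.2)),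
           ((((J : ℂ) + (S : ℂ) * (K : ℂ)) / (4 * ((-S ^ 2 : ℝ) : ℂ) * (S : ℂ))) • (σ₂ *ᵥ bd.1))
            + ((1 : Matrix (Fin 2) (Fin 2) ℂ)
                - ((Complex.I * (J : ℂ) + 2 * Complex.I * (S : ℂ) * (K : ℂ)) / (4 * ((-S ^ 2 : ℝ) : ℂ))) • σ₂)
              *ᵥ bd.2),
        map_add' := by
          intro x y
          refine Prod.ext ?_ ?_ <;>
            simp [Matrix.mulVec_add, smul_add] <;> constructor <;> ring
        map_smul' := by
          intro a x
          refine Prod.ext ?_ ?_ <;>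
            simp [Matrix.mulVec_smul, smul_smul, smul_comm a] <;> constructor <;> ring } with hL
    have hinj : Function.Injective L := by
      rw [← LinearMap.ker_eq_bot]
      refine (Submodule.eq_bot_iff _).mpr ?_
      rintro ⟨b, d⟩ hx
      rw [LinearMap.mem_ker] at hx
      have h1 := congrArg Prod.fst hx
      have h2 := congrArg Prod.snd hx
      simp only [hL, LinearMap.coe_mk, AddHom.coe_mk] at h1 h2
      have e0 := congrFun h1 0
      have e1 := congrFun h1 1
      have e2 := congrFun h2 0
      have e3 := congrFun h2 1
      simp only [σ₂, Matrix.mulVec, dotProduct, Fin.sum_univ_two, Matrix.sub_apply,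
          Matrix.one_apply, Matrix.smul_apply, smul_eq_mul, Pi.add_apply, Pi.smul_apply,
          Matrix.cons_val', Matrix.cons_val_zero, Matrix.cons_val_one, Matrix.head_cons,
          Matrix.head_fin_const, Matrix.empty_val', Matrix.cons_val_fin_one,
          Matrix.of_apply, Fin.isValue, Prod.fst_zero, Prod.snd_zero, Pi.zero_apply] at e0 e1 e2 e3
      push_cast at e0 e1 e2 e3
      have E0 : 4*(S:ℂ)^2*(b 0) + (J:ℂ)*(b 1) - 2*(S:ℂ)*(J:ℂ)*(Complex.I*(d 1)) = 0 := by
        linear_combination (norm := (field_simp; ring_nf; simp only [aux_I_pow2, aux_I_pow3, aux_I_pow4, aux_I_pow5, aux_I_pow6, aux_I_pow7, aux_I_pow8]; try field_simp; try ring1)) (4*(S:ℂ)^2) * e0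
      have E1 : 4*(S:ℂ)^2*(b 1) - (J:ℂ)*(b 0) + 2*(S:ℂ)*(J:ℂ)*(Complex.I*(d 0)) = 0 := by
        linear_combination (norm := (field_simp; ring_nf; simp only [aux_I_pow2, aux_I_pow3, aux_I_pow4, aux_I_pow5, aux_I_pow6, aux_I_pow7, aux_I_pow8]; try field_simp; try ring1)) (4*(S:ℂ)^2) * e1
      have E2 : ((J:ℂ)+(S:ℂ)*(K:ℂ))*(b 1) - 4*(S:ℂ)^3*(Complex.I*(d 0)) - (S:ℂ)*((J:ℂ)+2*(S:ℂ)*(K:ℂ))*(Complex.I*(d 1)) = 0 := by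
        linear_combination (norm := (field_simp; ring_nf; simp only [aux_I_pow2, aux_I_pow3, aux_I_pow4, aux_I_pow5, aux_I_pow6, aux_I_pow7, aux_I_pow8]; try field_simp; try ring1)) (-4*(S:ℂ)^3*Complex.I) * e2
      have E3 : -((J:ℂ)+(S:ℂ)*(K:ℂ))*(b 0) + (S:ℂ)*((J:ℂ)+2*(S:ℂ)*(K:ℂ))*(Complex.I*(d 0)) - 4*(S:ℂ)^3*(Complex.I*(d 1)) = 0 := by
        linear_combination (norm := (field_simp; ring_nf; simp only [aux_I_pow2, aux_I_pow3, aux_I_pow4, aux_I_pow5, aux_I_pow6, aux_I_pow7, aux_I_pow8]; try field_simp; try ring1)) (-4*(S:ℂ)^3*Complex.I) * e3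
      have hD' : ((S:ℂ)^4*16+(J:ℂ)^2)^2 + (S:ℂ)^4*8^2*((J:ℂ)+(S:ℂ)*(K:ℂ))^2 ≠ 0 := by
        convert hD using 1; ring
      have hD'' : ((S:ℂ)^4*16+(J:ℂ)^2)^2 + 8^2*(S:ℂ)^4*((J:ℂ)+(S:ℂ)*(K:ℂ))^2 ≠ 0 := by
        convert hD using 1; ring
      have hb0 : b 0 = 0 := by
        linear_combination (norm := (field_simp; ring1)) ((((12)*(S:ℂ)^4*(J:ℂ)^2 + (24)*(S:ℂ)^5*(J:ℂ)*(K:ℂ) + (16)*(S:ℂ)^6*(K:ℂ)^2 + (64)*(S:ℂ)^8))/((S:ℂ)^2*((16*(S:ℂ)^4+(J:ℂ)^2)^2+(8*(S:ℂ)^2*((J:ℂ)+(S:ℂ)*(K:ℂ)))^2))) * E0 + ((((1)*(S:ℂ)^2*(J:ℂ)^3 + (2)*(S:ℂ)^3*(J:ℂ)^2*(K:ℂ) + (-16)*(S:ℂ)^6*(J:ℂ)))/((S:ℂ)^2*((16*(S:ℂ)^4+(J:ℂ)^2)^2+(8*(S:ℂ)^2*((J:ℂ)+(S:ℂ)*(K:ℂ)))^2)))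 * E1 + ((((-16)*(S:ℂ)^4*(J:ℂ)^2 + (-16)*(S:ℂ)^5*(J:ℂ)*(K:ℂ)))/((S:ℂ)^2*((16*(S:ℂ)^4+(J:ℂ)^2)^2+(8*(S:ℂ)^2*((J:ℂ)+(S:ℂ)*(K:ℂ)))^2))) * E2 + ((((-2)*(S:ℂ)^2*(J:ℂ)^3 + (-32)*(S:ℂ)^6*(J:ℂ)))/((S:ℂ)^2*((16*(S:ℂ)^4+(J:ℂ)^2)^2+(8*(S:ℂ)^2*((J:ℂ)+(S:ℂ)*(K:ℂ)))^2))) * E3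
      have hb1 : b 1 = 0 := by
        linear_combination (norm := (field_simp; ring1)) ((((-1)*(S:ℂ)^2*(J:ℂ)^3 + (-2)*(S:ℂ)^3*(J:ℂ)^2*(K:ℂ) + (16)*(S:ℂ)^6*(J:ℂ)))/((S:ℂ)^2*((16*(S:ℂ)^4+(J:ℂ)^2)^2+(8*(S:ℂ)^2*((J:ℂ)+(S:ℂ)*(K:ℂ)))^2))) * E0 + ((((12)*(S:ℂ)^4*(J:ℂ)^2 + (24)*(S:ℂ)^5*(J:ℂ)*(K:ℂ) + (16)*(S:ℂ)^6*(K:ℂ)^2 + (64)*(S:ℂ)^8))/((S:ℂ)^2*((16*(S:ℂ)^4+(J:ℂ)^2)^2+(8*(S:ℂ)^2*((J:ℂ)+(S:ℂ)*(K:ℂ)))^2))) * E1 + ((((2)*(S:ℂ)^2*(J:ℂ)^3 + (32)*(S:ℂ)^6*(J:ℂ)))/((S:ℂ)^2*((16*(S:ℂ)^4+(J:ℂ)^2)^2+(8*(S:ℂ)^2*((J:ℂ)+(S:ℂ)*(K:ℂ)))^2))) * E2 + ((((-16)*(S:ℂ)^4*(J:ℂ)^2 + (-16)*(S:ℂ)^5*(J:ℂ)*(K:ℂ)))/((S:ℂ)^2*((16*(S:ℂ)^4+(J:ℂ)^2)^2+(8*(S:ℂ)^2*((J:ℂ)+(S:ℂ)*(K:ℂ)))^2)))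 * E3
      have hu0 : Complex.I*(d 0) = 0 := by
        linear_combination (norm := (field_simp; ring1)) ((((8)*(S:ℂ)^3*(J:ℂ)^2 + (16)*(S:ℂ)^4*(J:ℂ)*(K:ℂ) + (8)*(S:ℂ)^5*(K:ℂ)^2))/((S:ℂ)^2*((16*(S:ℂ)^4+(J:ℂ)^2)^2+(8*(S:ℂ)^2*((J:ℂ)+(S:ℂ)*(K:ℂ)))^2))) * E0 + ((((1)*(S:ℂ)*(J:ℂ)^3 + (1)*(S:ℂ)^2*(J:ℂ)^2*(K:ℂ) + (16)*(S:ℂ)^5*(J:ℂ) + (16)*(S:ℂ)^6*(K:ℂ)))/((S:ℂ)^2*((16*(S:ℂ)^4+(J:ℂ)^2)^2+(8*(S:ℂ)^2*((J:ℂ)+(S:ℂ)*(K:ℂ)))^2))) * E1 + ((((-12)*(S:ℂ)^3*(J:ℂ)^2 + (-8)*(S:ℂ)^4*(J:ℂ)*(K:ℂ) + (-64)*(S:ℂ)^7))/((S:ℂ)^2*((16*(S:ℂ)^4+(J:ℂ)^2)^2+(8*(S:ℂ)^2*((J:ℂ)+(S:ℂ)*(K:ℂ)))^2))) * E2 + ((((-1)*(S:ℂ)*(J:ℂ)^3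 + (16)*(S:ℂ)^5*(J:ℂ) + (32)*(S:ℂ)^6*(K:ℂ)))/((S:ℂ)^2*((16*(S:ℂ)^4+(J:ℂ)^2)^2+(8*(S:ℂ)^2*((J:ℂ)+(S:ℂ)*(K:ℂ)))^2))) * E3
      have hu1 : Complex.I*(d 1) = 0 := by
        linear_combination (norm := (field_simp; ring1)) ((((-1)*(S:ℂ)*(J:ℂ)^3 + (-1)*(S:ℂ)^2*(J:ℂ)^2*(K:ℂ) + (-16)*(S:ℂ)^5*(J:ℂ) + (-16)*(S:ℂ)^6*(K:ℂ)))/((S:ℂ)^2*((16*(S:ℂ)^4+(J:ℂ)^2)^2+(8*(S:ℂ)^2*((J:ℂ)+(S:ℂ)*(K:ℂ)))^2))) * E0 + ((((8)*(S:ℂ)^3*(J:ℂ)^2 + (16)*(S:ℂ)^4*(J:ℂ)*(K:ℂ) + (8)*(S:ℂ)^5*(K:ℂ)^2))/((S:ℂ)^2*((16*(S:ℂ)^4+(J:ℂ)^2)^2+(8*(S:ℂ)^2*((J:ℂ)+(S:ℂ)*(K:ℂ)))^2))) * E1 + ((((1)*(S:ℂ)*(J:ℂ)^3 + (-16)*(S:ℂ)^5*(J:ℂ)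 + (-32)*(S:ℂ)^6*(K:ℂ)))/((S:ℂ)^2*((16*(S:ℂ)^4+(J:ℂ)^2)^2+(8*(S:ℂ)^2*((J:ℂ)+(S:ℂ)*(K:ℂ)))^2))) * E2 + ((((-12)*(S:ℂ)^3*(J:ℂ)^2 + (-8)*(S:ℂ)^4*(J:ℂ)*(K:ℂ) + (-64)*(S:ℂ)^7))/((S:ℂ)^2*((16*(S:ℂ)^4+(J:ℂ)^2)^2+(8*(S:ℂ)^2*((J:ℂ)+(S:ℂ)*(K:ℂ)))^2))) * E3
      have hd0 : d 0 = 0 := by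
        have := mul_eq_zero.mp hu0
        simpa [Complex.I_ne_zero] using this
      have hd1 : d 1 = 0 := by
        have := mul_eq_zero.mp hu1
        simpa [Complex.I_ne_zero] using this
      refine Prod.ext ?_ ?_ <;> funext i <;> fin_cases i <;>
        simpa using (by assumption : _ = (0:ℂ))
    obtain ⟨w, hw⟩ := (LinearMap.injective_iff_surjective.mp hinj)
      (![(J : ℂ), 0], ![Complex.I * (K : ℂ), 0])
    have hw1 := congrArg Prod.fst hw
    have hw2 := congrArg Prod.snd hw
    simp only [hL, LinearMap.coe_mk, AddHom.coe_mk] at hw1 hw2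
    refine ⟨w, ⟨hw1, hw2⟩, ?_⟩
    rintro y ⟨hy1, hy2⟩
    apply hinj
    rw [hw]
    exact Prod.ext hy1 hy2
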